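/- Let V be a finite-dimensional complex inner product space with orthonormal basis (e_i), and let δ(e_i) = e_i ⊗ e_i be the associated copy map. Then a nonzero vector ψ ∈ V satisfies δ(ψ) = ψ ⊗ ψ if and only if ψ = e_i for some i. In other words, the copyable states of the copy-spider are exactly the orthonormal basis vectors. -/
import Mathlib


/-- The copy map δ(e_i) = e_i ⊗ e_i on ℂⁿ (with V ⊗ V realized as
functions on `Fin n × Fin n`). -/
def copyVec (n : ℕ) (ψ : Fin n → ℂ) : Fin n × Fin n → ℂ :=
  fun p => if p.1 = p.2 then ψ p.1 else 0

/-- The tensor product of two vectors. -/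
def tensorVec (n : ℕ) (ψ φ : Fin n → ℂ) : Fin n × Fin n → ℂ :=
  fun p => ψ p.1 * φ p.2

/-- a nonzero ψ satisfies δ(ψ) = ψ ⊗ ψ iff ψ is one of the
orthonormal basis vectors e_i; copyable states are exactly basis vectors. -/
theorem copyable_iff_basis (n : ℕ) (ψ : Fin n → ℂ) (hψ : ψ ≠ 0) :
    copyVec n ψ = tensorVec n ψ ψ ↔ ∃ i : Fin n, ψ = Pi.single i 1 := by
  constructor
  · intro h
    have hdiag : ∀ i : Fin n, ψ i = ψ i * ψ i := fun i => by
      have := congrFun h (i, i)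
      simpa [copyVec, tensorVec] using this
    have hoff : ∀ i j : Fin n, i ≠ j → ψ i * ψ j = 0 := fun i j hij => by
      have := congrFun h (i, j)
      simpa [copyVec, tensorVec, hij] using this
    obtain ⟨i, hi⟩ : ∃ i, ψ i ≠ 0 := by
      by_contra hc
      push_neg at hc
      exact hψ (funext fun i => hc i)
    have hi1 : ψ i = 1 := by
      have := (hdiag i).symm
      have h1 : ψ i * ψ i = ψ i * 1 := by rw [mul_one]; exact this
      exact mul_left_cancel₀ hi h1
    refine ⟨i, funext fun j => ?_⟩
    rcases eq_or_ne j i with rfl | hji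
    · simp [hi1]
    · have := hoff i j (fun hij => hji hij.symm)
      have hj0 : ψ j = 0 := by
        rcases mul_eq_zero.mp this with h0 | h0
        · exact absurd h0 hi
        · exact h0
      simp [hj0, Pi.single_apply, hji]
  · rintro ⟨i, rfl⟩
    funext p
    by_cases hp : p.1 = p.2 <;>
      simp [copyVec, tensorVec, hp, Pi.single_apply] <;>
      aesop
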